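/- Let M be a natural number, let μ_0, …, μ_M ∈ (-1,1) and ω_0, …, ω_M > 0 satisfy Σ_{m=0}^{M} ω_m p(μ_m) = ∫_{-1}^{1} p(μ) dμ for every polynomial p of degree at most 2M+1. Let c > 0, let Σ_t : [-1,1] × [-1,1] → ℝ be continuous and Σ_s : [-1,1] × [-1,1] × [-1,1] → ℝ be continuous and nonnegative, and assume the discrete subcriticality conditions: for all x ∈ [-1,1] and all 0 ≤ m, i ≤ M, Σ_t(x,μ_m) - (1/2) Σ_{i=0}^{M} ω_i Σ_s(x,μ_i,μ_m) ≥ c/2 and Σ_t(x,μ_i) - (1/2) Σ_{m=0}^{M} ω_m Σ_s(x,μ_i,μ_m) ≥ c/2. Let ψ(x,μ) = Σ_{j=0}^{M} c_j(x) μ^j with each c_j : [-1,1] → ℝ continuously differentiable, and suppose ψ(-1,μ_m) = 0 whenever μ_m > 0 and ψ(1,μ_m) = 0 whenever μ_m < 0. Then Σ_{m=0}^{M} ω_m ∫_{-1}^{1} [ μ_m (∂_x ψ)(x,μ_m) ψ(x,μ_m) + Σ_t(x,μ_m) ψ(x,μ_m)^2 - (1/2) Σ_{i=0}^{M} ω_i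 Σ_s(x,μ_i,μ_m) ψ(x,μ_i) ψ(x,μ_m) ] dx ≥ (c/2) ∫_{-1}^{1} ∫_{-1}^{1} ψ(x,μ)^2 dμ dx + (1/2) Σ_{m=0}^{M} ω_m |μ_m| ψ(sign(μ_m), μ_m)^2. -/

import Mathlib

open MeasureTheory Polynomial Set

private lemma coercive_alg {n : ℕ} (ω : Fin n → ℝ) (hω : ∀ m, 0 ≤ ω m)
    (s : Fin n → Fin n → ℝ) (hs : ∀ i m, 0 ≤ s i m)
    (t : Fin n → ℝ) (c : ℝ)
    (h1 : ∀ m, c / 2 + (1 / 2) * ∑ i, ω i * s i m ≤ t m)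
    (h2 : ∀ m, c / 2 + (1 / 2) * ∑ i, ω i * s m i ≤ t m)
    (v : Fin n → ℝ) :
    (c / 2) * ∑ m, ω m * v m ^ 2
      ≤ ∑ m, ω m * (t m * v m ^ 2 - (1 / 2) * ∑ i, ω i * s i m * v i * v m) := by
  have hm : ∀ m : Fin n, ω m * (t m * v m ^ 2 - (1 / 2) * ∑ i, ω i * s i m * v i * v m)
      = ω m * v m ^ 2 * (t m - c / 2 - (1/4) * (∑ i, ω i * s i m) - (1/4) * (∑ i, ω i * s m i))
        + (c / 2) * (ω m * v m ^ 2)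
        + ∑ i, (ω m * ω i * s i m * (v i - v m) ^ 2 / 4
            + ω m * ω i * s m i * v m ^ 2 / 4 - ω m * ω i * s i m * v i ^ 2 / 4) := by
    intro m
    have e1 : ∑ i, (ω m * ω i * s i m * (v i - v m) ^ 2 / 4
            + ω m * ω i * s m i * v m ^ 2 / 4 - ω m * ω i * s i m * v i ^ 2 / 4)
        = (ω m * v m ^ 2 / 4) * (∑ i, ω i * s i m)
          + (ω m * v m ^ 2 / 4) * (∑ i, ω i * s m i)
          - (ω m / 2) * (∑ i, ω i * s i m * v i * v m) := by
      rw [Finset.mul_sum, Finset.mul_sum, Finset.mul_sum, ← Finset.sum_add_distrib,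
        ← Finset.sum_sub_distrib]
      exact Finset.sum_congr rfl fun i _ => by ring
    rw [e1]; ring
  rw [Finset.sum_congr rfl (fun m _ => hm m), Finset.sum_add_distrib, Finset.sum_add_distrib]
  have hC : ∑ m : Fin n, ∑ i, (ω m * ω i * s i m * (v i - v m) ^ 2 / 4
            + ω m * ω i * s m i * v m ^ 2 / 4 - ω m * ω i * s i m * v i ^ 2 / 4)
      = (∑ m : Fin n, ∑ i, ω m * ω i * s i m * (v i - v m) ^ 2 / 4)
        + (∑ m : Fin n, ∑ i, ω m * ω i * s m i * v m ^ 2 / 4)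
        - (∑ m : Fin n, ∑ i, ω m * ω i * s i m * v i ^ 2 / 4) := by
    simp only [Finset.sum_add_distrib, Finset.sum_sub_distrib]
  have hB : ∑ m : Fin n, (c / 2) * (ω m * v m ^ 2) = (c / 2) * ∑ m, ω m * v m ^ 2 :=
    (Finset.mul_sum _ _ _).symm
  have hswap : ∑ m : Fin n, ∑ i, ω m * ω i * s i m * v i ^ 2 / 4
      = ∑ m : Fin n, ∑ i, ω m * ω i * s m i * v m ^ 2 / 4 := by
    rw [Finset.sum_comm]
    exact Finset.sum_congr rfl fun i _ => Finset.sum_congr rfl fun m _ => by ring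
  have hF : 0 ≤ ∑ m : Fin n, ω m * v m ^ 2
      * (t m - c / 2 - (1/4) * (∑ i, ω i * s i m) - (1/4) * (∑ i, ω i * s m i)) := by
    refine Finset.sum_nonneg fun m _ => mul_nonneg (mul_nonneg (hω m) (sq_nonneg _)) ?_
    have := h1 m; have := h2 m; linarith
  have hE : 0 ≤ ∑ m : Fin n, ∑ i, ω m * ω i * s i m * (v i - v m) ^ 2 / 4 := by
    refine Finset.sum_nonneg fun m _ => Finset.sum_nonneg fun i _ => ?_
    have h : 0 ≤ ω m * ω i * s i m := mul_nonneg (mul_nonneg (hω m) (hω i)) (hs i m)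
    positivity
  rw [hC, hB, hswap]
  linarith

/-- Coercivity of the semi-discrete transport bilinear form: under the discrete
subcriticality assumptions on continuous cross sections `St` (total) and
`Ss ≥ 0` (scattering), for a Legendre–Gauss-type quadrature (nodes in `(-1,1)`,
positive weights, exact for polynomials of degree ≤ 2M+1) and a function
`ψ(x,μ) = Σ_{j=0}^M c_j(x) μ^j` with continuously differentiable coefficients,
vanishing at the inflow boundary for each discrete direction,
`⟨𝓛_M ψ, ψ⟩_M ≥ (c/2) |||ψ|||² + (1/2) Σ_m ω_m |μ_m| ψ(sign μ_m, μ_m)²`. -/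
theorem semidiscrete_coercivity (M : ℕ) (μ ω : Fin (M + 1) → ℝ)
    (hμ : ∀ m, μ m ∈ Ioo (-1 : ℝ) 1) (hω : ∀ m, 0 < ω m)
    (hquad : ∀ p : Polynomial ℝ, p.degree ≤ (2 * M + 1 : ℕ) →
      ∑ m, ω m * p.eval (μ m) = ∫ x in (-1 : ℝ)..1, p.eval x)
    (c : ℝ) (hc : 0 < c)
    (St : ℝ → ℝ → ℝ)
    (hSt : ContinuousOn (fun q : ℝ × ℝ => St q.1 q.2)
      (Icc (-1 : ℝ) 1 ×ˢ Icc (-1 : ℝ) 1))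
    (Ss : ℝ → ℝ → ℝ → ℝ)
    (hSs : ContinuousOn (fun q : ℝ × ℝ × ℝ => Ss q.1 q.2.1 q.2.2)
      (Icc (-1 : ℝ) 1 ×ˢ Icc (-1 : ℝ) 1 ×ˢ Icc (-1 : ℝ) 1))
    (hSs0 : ∀ x ∈ Icc (-1 : ℝ) 1, ∀ ν ∈ Icc (-1 : ℝ) 1, ∀ μ' ∈ Icc (-1 : ℝ) 1,
      0 ≤ Ss x ν μ')
    (hsub1 : ∀ x ∈ Icc (-1 : ℝ) 1, ∀ m,
      St x (μ m) - (1 / 2) * ∑ i, ω i * Ss x (μ i) (μ m) ≥ c / 2)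
    (hsub2 : ∀ x ∈ Icc (-1 : ℝ) 1, ∀ i,
      St x (μ i) - (1 / 2) * ∑ m, ω m * Ss x (μ i) (μ m) ≥ c / 2)
    (cf cf' : Fin (M + 1) → ℝ → ℝ)
    (hderiv : ∀ j, ∀ x ∈ Icc (-1 : ℝ) 1,
      HasDerivWithinAt (cf j) (cf' j x) (Icc (-1 : ℝ) 1) x)
    (hcont : ∀ j, ContinuousOn (cf' j) (Icc (-1 : ℝ) 1))
    (hbcl : ∀ m, 0 < μ m → ∑ j, cf j (-1) * μ m ^ (j : ℕ) = 0)
    (hbcr : ∀ m, μ m < 0 → ∑ j, cf j 1 * μ m ^ (j : ℕ) = 0) :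
    ∑ m, ω m * ∫ x in (-1 : ℝ)..1,
        (μ m * (∑ j, cf' j x * μ m ^ (j : ℕ)) * (∑ j, cf j x * μ m ^ (j : ℕ))
          + St x (μ m) * (∑ j, cf j x * μ m ^ (j : ℕ)) ^ 2
          - (1 / 2) * ∑ i, ω i * Ss x (μ i) (μ m) * (∑ j, cf j x * μ i ^ (j : ℕ))
              * (∑ j, cf j x * μ m ^ (j : ℕ)))
      ≥ (c / 2) * (∫ x in (-1 : ℝ)..1, ∫ ν in (-1 : ℝ)..1,
            (∑ j, cf j x * ν ^ (j : ℕ)) ^ 2)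
        + (1 / 2) * ∑ m, ω m * |μ m|
            * (∑ j, cf j (Real.sign (μ m)) * μ m ^ (j : ℕ)) ^ 2 := by
  have hab : (-1 : ℝ) ≤ 1 := by norm_num
  have huIcc : uIcc (-1 : ℝ) 1 = Icc (-1 : ℝ) 1 := uIcc_of_le hab
  have hμI : ∀ m, μ m ∈ Icc (-1 : ℝ) 1 := fun m => Ioo_subset_Icc_self (hμ m)
  -- derivative and continuity of ψ_m
  have hPd : ∀ m, ∀ x ∈ Icc (-1 : ℝ) 1,
      HasDerivWithinAt (fun x => ∑ j, cf j x * μ m ^ (j : ℕ))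
        (∑ j, cf' j x * μ m ^ (j : ℕ)) (Icc (-1 : ℝ) 1) x := fun m x hx =>
    HasDerivWithinAt.fun_sum fun j _ => (hderiv j x hx).mul_const _
  have hPc : ∀ m, ContinuousOn (fun x => ∑ j, cf j x * μ m ^ (j : ℕ)) (Icc (-1 : ℝ) 1) :=
    fun m x hx => ((hPd m x hx).differentiableWithinAt).continuousWithinAt
  have hP'c : ∀ m, ContinuousOn (fun x => ∑ j, cf' j x * μ m ^ (j : ℕ)) (Icc (-1 : ℝ) 1) :=
    fun m => continuousOn_finset_sum _ fun j _ => (hcont j).mul continuousOn_const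
  -- continuity of cross-section slices
  have hStx : ∀ m, ContinuousOn (fun x : ℝ => St x (μ m)) (Icc (-1 : ℝ) 1) := by
    intro m
    exact hSt.comp (f := fun x : ℝ => (x, μ m)) (continuousOn_id.prodMk continuousOn_const) fun x hx => ⟨hx, hμI m⟩
  have hSsx : ∀ i m, ContinuousOn (fun x : ℝ => Ss x (μ i) (μ m)) (Icc (-1 : ℝ) 1) := by
    intro i m
    exact hSs.comp (f := fun x : ℝ => (x, μ i, μ m)) (continuousOn_id.prodMk
      (continuousOn_const.prodMk continuousOn_const)) fun x hx => ⟨hx, hμI i, hμI m⟩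
  -- continuity of f and g
  have hfc : ∀ m, ContinuousOn (fun x =>
      μ m * (∑ j, cf' j x * μ m ^ (j : ℕ)) * (∑ j, cf j x * μ m ^ (j : ℕ)))
      (Icc (-1 : ℝ) 1) :=
    fun m => ((continuousOn_const.mul (hP'c m)).mul (hPc m))
  have hgc : ∀ m, ContinuousOn (fun x =>
      St x (μ m) * (∑ j, cf j x * μ m ^ (j : ℕ)) ^ 2
        - (1 / 2) * ∑ i, ω i * Ss x (μ i) (μ m) * (∑ j, cf j x * μ i ^ (j : ℕ))
            * (∑ j, cf j x * μ m ^ (j : ℕ))) (Icc (-1 : ℝ) 1) := by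
    intro m
    exact ((hStx m).mul ((hPc m).pow 2)).sub (continuousOn_const.mul
      (continuousOn_finset_sum _ fun i _ =>
        ((continuousOn_const.mul (hSsx i m)).mul (hPc i)).mul (hPc m)))
  have hfint : ∀ m, IntervalIntegrable (fun x =>
      μ m * (∑ j, cf' j x * μ m ^ (j : ℕ)) * (∑ j, cf j x * μ m ^ (j : ℕ)))
      volume (-1 : ℝ) 1 := fun m => (huIcc ▸ hfc m).intervalIntegrable
  have hgint : ∀ m, IntervalIntegrable (fun x =>
      St x (μ m) * (∑ j, cf j x * μ m ^ (j : ℕ)) ^ 2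
        - (1 / 2) * ∑ i, ω i * Ss x (μ i) (μ m) * (∑ j, cf j x * μ i ^ (j : ℕ))
            * (∑ j, cf j x * μ m ^ (j : ℕ))) volume (-1 : ℝ) 1 :=
    fun m => (huIcc ▸ hgc m).intervalIntegrable
  -- transport term
  have hbd : ∀ m, (∫ x in (-1 : ℝ)..1,
        μ m * (∑ j, cf' j x * μ m ^ (j : ℕ)) * (∑ j, cf j x * μ m ^ (j : ℕ)))
      = μ m / 2 * ((∑ j, cf j 1 * μ m ^ (j : ℕ)) ^ 2
          - (∑ j, cf j (-1) * μ m ^ (j : ℕ)) ^ 2) := by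
    intro m
    have hF : ∀ x ∈ Icc (-1 : ℝ) 1,
        HasDerivWithinAt (fun x => μ m / 2 * (∑ j, cf j x * μ m ^ (j : ℕ)) ^ 2)
          (μ m * (∑ j, cf' j x * μ m ^ (j : ℕ)) * (∑ j, cf j x * μ m ^ (j : ℕ)))
          (Icc (-1 : ℝ) 1) x := by
      intro x hx
      have h := ((hPd m x hx).fun_pow 2).const_mul (μ m / 2)
      refine h.congr_deriv ?_
      rw [show (2:ℕ) - 1 = 1 from rfl, pow_one]
      push_cast
      ring
    have key := intervalIntegral.integral_eq_sub_of_hasDeriv_right_of_le hab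
      (continuousOn_const.mul ((hPc m).pow 2))
      (fun x hx => ((hF x (Ioo_subset_Icc_self hx)).hasDerivAt
        (Icc_mem_nhds hx.1 hx.2)).hasDerivWithinAt)
      (hfint m)
    rw [key]; simp only [Pi.mul_apply, Pi.pow_apply]; ring
  -- boundary sum identity
  have hbnd : ∑ m, ω m * (μ m / 2 * ((∑ j, cf j 1 * μ m ^ (j : ℕ)) ^ 2
          - (∑ j, cf j (-1) * μ m ^ (j : ℕ)) ^ 2))
      = (1 / 2) * ∑ m, ω m * |μ m|
          * (∑ j, cf j (Real.sign (μ m)) * μ m ^ (j : ℕ)) ^ 2 := by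
    rw [Finset.mul_sum]
    refine Finset.sum_congr rfl fun m _ => ?_
    rcases lt_trichotomy (μ m) 0 with h | h | h
    · rw [Real.sign_of_neg h, abs_of_neg h, hbcr m h]; ring
    · rw [h]; simp
    · rw [Real.sign_of_pos h, abs_of_pos h, hbcl m h]; ring
  -- quadrature identity
  have hquadpt : ∀ x : ℝ, ∑ m, ω m * (∑ j, cf j x * μ m ^ (j : ℕ)) ^ 2
      = ∫ ν in (-1 : ℝ)..1, (∑ j, cf j x * ν ^ (j : ℕ)) ^ 2 := by
    intro x
    set q : Polynomial ℝ := ∑ j : Fin (M + 1), C (cf j x) * X ^ (j : ℕ) with hq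
    have hev : ∀ r : ℝ, (q ^ 2).eval r = (∑ j, cf j x * r ^ (j : ℕ)) ^ 2 := by
      intro r
      simp [hq, eval_finset_sum]
    have hdq : q.degree ≤ (M : ℕ) := by
      refine (degree_sum_le _ _).trans (Finset.sup_le fun j _ => ?_)
      exact (degree_C_mul_X_pow_le _ _).trans (by exact_mod_cast Nat.cast_le.mpr j.is_le)
    have hdeg : (q ^ 2).degree ≤ (2 * M + 1 : ℕ) := by
      calc (q ^ 2).degree = (q * q).degree := by rw [sq]
        _ ≤ q.degree + q.degree := degree_mul_le _ _
        _ ≤ (M : ℕ) + (M : ℕ) := add_le_add hdq hdq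
        _ = ((M + M : ℕ) : WithBot ℕ) := by push_cast; rfl
        _ ≤ ((2 * M + 1 : ℕ) : WithBot ℕ) := by
            have h : M + M ≤ 2 * M + 1 := by omega
            exact_mod_cast h
    have h := hquad (q ^ 2) hdeg
    simp only [hev] at h
    exact h
  -- pointwise coercivity
  have hpt : ∀ x ∈ Icc (-1 : ℝ) 1,
      (c / 2) * ∑ m, ω m * (∑ j, cf j x * μ m ^ (j : ℕ)) ^ 2
        ≤ ∑ m, ω m * (St x (μ m) * (∑ j, cf j x * μ m ^ (j : ℕ)) ^ 2
            - (1 / 2) * ∑ i, ω i * Ss x (μ i) (μ m) * (∑ j, cf j x * μ i ^ (j : ℕ))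
                * (∑ j, cf j x * μ m ^ (j : ℕ))) := by
    intro x hx
    refine coercive_alg ω (fun m => (hω m).le) (fun i m => Ss x (μ i) (μ m))
      (fun i m => hSs0 x hx _ (hμI i) _ (hμI m)) (fun m => St x (μ m)) c
      (fun m => by have := hsub1 x hx m; linarith)
      (fun m => by have := hsub2 x hx m; linarith)
      (fun m => ∑ j, cf j x * μ m ^ (j : ℕ))
  -- split each integral
  have hsplit : ∀ m, (∫ x in (-1 : ℝ)..1,
        (μ m * (∑ j, cf' j x * μ m ^ (j : ℕ)) * (∑ j, cf j x * μ m ^ (j : ℕ))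
          + St x (μ m) * (∑ j, cf j x * μ m ^ (j : ℕ)) ^ 2
          - (1 / 2) * ∑ i, ω i * Ss x (μ i) (μ m) * (∑ j, cf j x * μ i ^ (j : ℕ))
              * (∑ j, cf j x * μ m ^ (j : ℕ))))
      = (∫ x in (-1 : ℝ)..1,
          μ m * (∑ j, cf' j x * μ m ^ (j : ℕ)) * (∑ j, cf j x * μ m ^ (j : ℕ)))
        + ∫ x in (-1 : ℝ)..1,
            (St x (μ m) * (∑ j, cf j x * μ m ^ (j : ℕ)) ^ 2
              - (1 / 2) * ∑ i, ω i * Ss x (μ i) (μ m) * (∑ j, cf j x * μ i ^ (j : ℕ))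
                  * (∑ j, cf j x * μ m ^ (j : ℕ))) := by
    intro m
    rw [← intervalIntegral.integral_add (hfint m) (hgint m)]
    exact intervalIntegral.integral_congr fun x _ => by ring
  -- the scattering part dominates the norm
  have hsumg : ∑ m, ω m * ∫ x in (-1 : ℝ)..1,
        (St x (μ m) * (∑ j, cf j x * μ m ^ (j : ℕ)) ^ 2
          - (1 / 2) * ∑ i, ω i * Ss x (μ i) (μ m) * (∑ j, cf j x * μ i ^ (j : ℕ))
              * (∑ j, cf j x * μ m ^ (j : ℕ)))
      = ∫ x in (-1 : ℝ)..1, ∑ m, ω m *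
          (St x (μ m) * (∑ j, cf j x * μ m ^ (j : ℕ)) ^ 2
            - (1 / 2) * ∑ i, ω i * Ss x (μ i) (μ m) * (∑ j, cf j x * μ i ^ (j : ℕ))
                * (∑ j, cf j x * μ m ^ (j : ℕ))) := by
    rw [intervalIntegral.integral_finset_sum
      (fun m _ => ((huIcc ▸ (continuousOn_const.mul (hgc m))).intervalIntegrable))]
    exact Finset.sum_congr rfl fun m _ => (intervalIntegral.integral_const_mul _ _).symm
  have hGge : (c / 2) * (∫ x in (-1 : ℝ)..1, ∫ ν in (-1 : ℝ)..1,
        (∑ j, cf j x * ν ^ (j : ℕ)) ^ 2)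
      ≤ ∫ x in (-1 : ℝ)..1, ∑ m, ω m *
          (St x (μ m) * (∑ j, cf j x * μ m ^ (j : ℕ)) ^ 2
            - (1 / 2) * ∑ i, ω i * Ss x (μ i) (μ m) * (∑ j, cf j x * μ i ^ (j : ℕ))
                * (∑ j, cf j x * μ m ^ (j : ℕ))) := by
    have hmono : ∫ x in (-1 : ℝ)..1,
        (c / 2) * ∑ m, ω m * (∑ j, cf j x * μ m ^ (j : ℕ)) ^ 2
        ≤ ∫ x in (-1 : ℝ)..1, ∑ m, ω m *
          (St x (μ m) * (∑ j, cf j x * μ m ^ (j : ℕ)) ^ 2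
            - (1 / 2) * ∑ i, ω i * Ss x (μ i) (μ m) * (∑ j, cf j x * μ i ^ (j : ℕ))
                * (∑ j, cf j x * μ m ^ (j : ℕ))) := by
      refine intervalIntegral.integral_mono_on hab ?_ ?_ hpt
      · exact (huIcc ▸ (continuousOn_const.mul (continuousOn_finset_sum _ fun m _ =>
          continuousOn_const.mul ((hPc m).pow 2)))).intervalIntegrable
      · exact (huIcc ▸ (continuousOn_finset_sum _ fun m _ =>
          continuousOn_const.mul (hgc m))).intervalIntegrable
    have heq : ∫ x in (-1 : ℝ)..1,
        (c / 2) * ∑ m, ω m * (∑ j, cf j x * μ m ^ (j : ℕ)) ^ 2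
        = (c / 2) * ∫ x in (-1 : ℝ)..1, ∫ ν in (-1 : ℝ)..1,
            (∑ j, cf j x * ν ^ (j : ℕ)) ^ 2 := by
      rw [intervalIntegral.integral_const_mul]
      congr 1
      exact intervalIntegral.integral_congr fun x _ => hquadpt x
    linarith [hmono, heq.symm.trans_le hmono]
  -- assemble
  calc ∑ m, ω m * ∫ x in (-1 : ℝ)..1,
        (μ m * (∑ j, cf' j x * μ m ^ (j : ℕ)) * (∑ j, cf j x * μ m ^ (j : ℕ))
          + St x (μ m) * (∑ j, cf j x * μ m ^ (j : ℕ)) ^ 2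
          - (1 / 2) * ∑ i, ω i * Ss x (μ i) (μ m) * (∑ j, cf j x * μ i ^ (j : ℕ))
              * (∑ j, cf j x * μ m ^ (j : ℕ)))
      = ∑ m, (ω m * (μ m / 2 * ((∑ j, cf j 1 * μ m ^ (j : ℕ)) ^ 2
            - (∑ j, cf j (-1) * μ m ^ (j : ℕ)) ^ 2))
          + ω m * ∫ x in (-1 : ℝ)..1,
              (St x (μ m) * (∑ j, cf j x * μ m ^ (j : ℕ)) ^ 2
                - (1 / 2) * ∑ i, ω i * Ss x (μ i) (μ m) * (∑ j, cf j x * μ i ^ (j : ℕ))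
                    * (∑ j, cf j x * μ m ^ (j : ℕ)))) := by
        refine Finset.sum_congr rfl fun m _ => ?_
        rw [hsplit m, hbd m, mul_add]
    _ = (1 / 2) * (∑ m, ω m * |μ m|
            * (∑ j, cf j (Real.sign (μ m)) * μ m ^ (j : ℕ)) ^ 2)
        + ∑ m, ω m * ∫ x in (-1 : ℝ)..1,
            (St x (μ m) * (∑ j, cf j x * μ m ^ (j : ℕ)) ^ 2
              - (1 / 2) * ∑ i, ω i * Ss x (μ i) (μ m) * (∑ j, cf j x * μ i ^ (j : ℕ))
                  * (∑ j, cf j x * μ m ^ (j : ℕ))) := by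
        rw [Finset.sum_add_distrib, hbnd]
    _ ≥ (c / 2) * (∫ x in (-1 : ℝ)..1, ∫ ν in (-1 : ℝ)..1,
            (∑ j, cf j x * ν ^ (j : ℕ)) ^ 2)
        + (1 / 2) * ∑ m, ω m * |μ m|
            * (∑ j, cf j (Real.sign (μ m)) * μ m ^ (j : ℕ)) ^ 2 := by
        rw [hsumg]
        linarith [hGge]
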